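/- Let (Xₜ)ₜ₌₁..T be a sequence of random variables adapted to a filtration (𝔉ₜ) with 0 ≤ Xₜ ≤ R almost surely. Then for every δ ∈ (0,1), with probability at least 1 − δ: ∑ₜ E[Xₜ | 𝔉ₜ₋₁] ≤ 2·∑ₜ Xₜ + 8R·log(2/δ). -/

import Mathlib

open MeasureTheory

lemma exp_neg_le_one_sub_half {x : ℝ} (h0 : 0 ≤ x) (h1 : x ≤ 1) :
    Real.exp (-x) ≤ 1 - x / 2 := by
  have hx1 : (0:ℝ) < 1 + x := by linarith
  have h2 : 1 + x ≤ Real.exp x := by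
    have := Real.add_one_le_exp x; linarith
  have h3 : Real.exp (-x) ≤ 1 / (1 + x) := by
    rw [Real.exp_neg, inv_eq_one_div]
    exact div_le_div_of_nonneg_left (by norm_num) hx1 h2
  refine h3.trans ?_
  rw [div_le_iff₀ hx1]
  nlinarith

/-- Freedman-type inequality: for an adapted sequence with 0 ≤ Xₜ ≤ R a.s., with
probability at least 1 − δ, the sum of conditional expectations is at most twice
the realized sum plus 8R·log(2/δ). -/
theorem freedman_conditional_sum_bound
    {Ω : Type*} {m0 : MeasurableSpace Ω} (μ : Measure Ω) [IsProbabilityMeasure μ]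
    (ℱ : Filtration ℕ m0) (X : ℕ → Ω → ℝ) (R : ℝ) (hR : 0 < R) (T : ℕ)
    (hadapted : Adapted ℱ X)
    (hnonneg : ∀ t, 0 ≤ᵐ[μ] X t) (hbdd : ∀ t, X t ≤ᵐ[μ] fun _ => R)
    (δ : ℝ) (hδ : δ ∈ Set.Ioo (0:ℝ) 1) :
    ENNReal.ofReal (1 - δ) ≤
      μ {ω | ∑ t ∈ Finset.range T, (μ[X (t+1) | ℱ t]) ω
              ≤ 2 * ∑ t ∈ Finset.range T, X (t+1) ω + 8 * R * Real.log (2 / δ)} := by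
  obtain ⟨hδ0, hδ1⟩ := hδ
  set C : ℕ → Ω → ℝ := fun t => μ[X (t+1) | ℱ t] with hC
  -- basic measurability / integrability
  have hXsm : ∀ t, StronglyMeasurable[m0] (X (t+1)) :=
    fun t => ((hadapted (t+1)).mono (ℱ.le (t+1)) le_rfl).stronglyMeasurable
  have hXint : ∀ t, Integrable (X (t+1)) μ := by
    intro t
    refine (integrable_const R).mono' (hXsm t).aestronglyMeasurable ?_
    filter_upwards [hnonneg (t+1), hbdd (t+1)] with ω h0 h1
    rw [Real.norm_eq_abs, abs_of_nonneg h0]; exact h1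
  have hCsm : ∀ t, StronglyMeasurable[ℱ t] (C t) := fun t => stronglyMeasurable_condExp
  have hC_nonneg : ∀ t, 0 ≤ᵐ[μ] C t := fun t => condExp_nonneg (hnonneg (t+1))
  have hC_le : ∀ t, C t ≤ᵐ[μ] fun _ => R := by
    intro t
    have := condExp_mono (m := ℱ t) (hXint t) (integrable_const R) (hbdd (t+1))
    rwa [condExp_const (ℱ.le t) R] at this
  -- the key conditional-expectation inequality
  have hH_int : ∀ t, Integrable (fun ω => Real.exp (-(X (t+1) ω / R))) μ := by
    intro t
    refine (integrable_const (1:ℝ)).mono'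
      (Real.continuous_exp.comp_stronglyMeasurable
        ((((hXsm t).measurable.div_const R).neg).stronglyMeasurable)).aestronglyMeasurable ?_
    filter_upwards [hnonneg (t+1)] with ω h0
    rw [Real.norm_eq_abs, abs_of_nonneg (Real.exp_pos _).le, Real.exp_le_one_iff]
    simp only [Left.neg_nonpos_iff]
    exact div_nonneg h0 hR.le
  have hkey : ∀ t, μ[fun ω => Real.exp (-(X (t+1) ω / R)) | ℱ t]
      ≤ᵐ[μ] fun ω => Real.exp (-(C t ω / (2*R))) := by
    intro t
    have h1 : (fun ω => Real.exp (-(X (t+1) ω / R)))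
        ≤ᵐ[μ] fun ω => 1 - X (t+1) ω / (2*R) := by
      filter_upwards [hnonneg (t+1), hbdd (t+1)] with ω h0 h1
      have := exp_neg_le_one_sub_half (x := X (t+1) ω / R)
        (div_nonneg h0 hR.le) (by rw [div_le_one hR]; exact h1)
      calc Real.exp (-(X (t+1) ω / R)) ≤ 1 - X (t+1) ω / R / 2 := this
        _ = 1 - X (t+1) ω / (2*R) := by ring
    have hG_int : Integrable (fun ω => 1 - X (t+1) ω / (2*R)) μ :=
      (integrable_const (1:ℝ)).sub ((hXint t).div_const (2*R))
    have h2 := condExp_mono (m := ℱ t) (hH_int t) hG_int h1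
    have h3 : μ[fun ω => 1 - X (t+1) ω / (2*R) | ℱ t]
        =ᵐ[μ] fun ω => 1 - C t ω / (2*R) := by
      have e1 : (fun ω => 1 - X (t+1) ω / (2*R))
          = (fun _ => (1:ℝ)) - (2*R)⁻¹ • (X (t+1)) := by
        funext ω; simp [smul_eq_mul, div_eq_inv_mul]
      rw [e1]
      refine (condExp_sub (integrable_const 1) (((hXint t)).smul ((2*R)⁻¹ : ℝ)) (ℱ t)).trans ?_
      rw [condExp_const (ℱ.le t) (1:ℝ)]
      have := condExp_smul (μ := μ) (m := ℱ t) ((2*R)⁻¹ : ℝ) (X (t+1))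
      filter_upwards [this] with ω hω
      simp only [Pi.sub_apply, Pi.smul_apply, smul_eq_mul] at *
      rw [hω]
      simp [hC, div_eq_inv_mul]
    refine (h2.trans h3.le).trans ?_
    filter_upwards with ω
    have := Real.add_one_le_exp (-(C t ω / (2*R)))
    linarith
  -- the exponential supermartingale
  set Z : ℕ → Ω → ℝ := fun n ω =>
    Real.exp (∑ t ∈ Finset.range n, (C t ω / (2*R) - X (t+1) ω / R)) with hZ
  have hZ_meas : ∀ n, StronglyMeasurable[ℱ n] (Z n) := by
    intro n
    refine Real.continuous_exp.comp_stronglyMeasurable ?_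
    refine Finset.stronglyMeasurable_fun_sum _ ?_
    intro t ht
    rw [Finset.mem_range] at ht
    exact ((((hCsm t).mono (ℱ.mono ht.le)).measurable.div_const _).stronglyMeasurable).sub
      ((((hadapted (t+1)).mono (ℱ.mono ht) le_rfl).div_const _).stronglyMeasurable)
  have hae : ∀ᵐ ω ∂μ, ∀ t, 0 ≤ X (t+1) ω ∧ X (t+1) ω ≤ R ∧ 0 ≤ C t ω ∧ C t ω ≤ R := by
    rw [ae_all_iff]
    intro t
    filter_upwards [hnonneg (t+1), hbdd (t+1), hC_nonneg t, hC_le t] with ω h1 h2 h3 h4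
    exact ⟨h1, h2, h3, h4⟩
  have hZ_bdd : ∀ n, ∀ᵐ ω ∂μ, Z n ω ≤ Real.exp (n / 2) := by
    intro n
    filter_upwards [hae] with ω hω
    rw [hZ]
    simp only
    rw [Real.exp_le_exp]
    calc ∑ t ∈ Finset.range n, (C t ω / (2*R) - X (t+1) ω / R)
        ≤ ∑ t ∈ Finset.range n, (1:ℝ)/2 := by
          refine Finset.sum_le_sum fun t _ => ?_
          obtain ⟨h1, _, _, h4⟩ := hω t
          have hx : X (t+1) ω / R ≥ 0 := by positivity
          have : C t ω / (2*R) ≤ 1/2 := by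
            rw [div_le_div_iff₀ (by positivity) (by norm_num)]
            linarith
          linarith
      _ = n / 2 := by simp [Finset.sum_const]; ring
  have hZ_int : ∀ n, Integrable (Z n) μ := by
    intro n
    refine (integrable_const (Real.exp (n / 2))).mono'
      ((hZ_meas n).mono (ℱ.le n)).aestronglyMeasurable ?_
    filter_upwards [hZ_bdd n] with ω h1
    rw [Real.norm_eq_abs, abs_of_nonneg (Real.exp_pos _).le]
    exact h1
  have hZ_pos : ∀ n ω, 0 < Z n ω := fun n ω => Real.exp_pos _
  -- supermartingale property: ∫ Z n ≤ 1
  have hZint_le : ∀ n, ∫ ω, Z n ω ∂μ ≤ 1 := by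
    intro n
    induction n with
    | zero => simp [hZ]
    | succ n ih =>
      set F : Ω → ℝ := fun ω => Z n ω * Real.exp (C n ω / (2*R)) with hF
      set H : Ω → ℝ := fun ω => Real.exp (-(X (n+1) ω / R)) with hHdef
      have hZsucc : Z (n+1) = F * H := by
        funext ω
        rw [hZ]
        simp only [Pi.mul_apply, hF, hHdef]
        rw [Finset.sum_range_succ, ← Real.exp_add, ← Real.exp_add]
        congr 1
        ring
      have hF_meas : StronglyMeasurable[ℱ n] F :=
        (hZ_meas n).mul (Real.continuous_exp.comp_stronglyMeasurable (((hCsm n).measurable.div_const _).stronglyMeasurable))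
      have hF_bdd : ∀ᵐ ω ∂μ, F ω ≤ Real.exp (n / 2) * Real.exp (1/2) := by
        filter_upwards [hZ_bdd n, hae] with ω h1 h2
        obtain ⟨_, _, h3, h4⟩ := h2 n
        refine mul_le_mul h1 ?_ (Real.exp_pos _).le (Real.exp_pos _).le
        rw [Real.exp_le_exp, div_le_div_iff₀ (by positivity) (by norm_num)]
        linarith
      have hFH_int : Integrable (F * H) μ := by
        refine (integrable_const (Real.exp (n / 2) * Real.exp (1/2))).mono'
          (((hF_meas.mono (ℱ.le n)).mul (Real.continuous_exp.comp_stronglyMeasurable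
            ((((hXsm n).measurable.div_const R).neg).stronglyMeasurable)))).aestronglyMeasurable ?_
        filter_upwards [hF_bdd, hae] with ω h1 h2
        obtain ⟨h3, _, _, _⟩ := h2 n
        have hH1 : H ω ≤ 1 := by
          rw [hHdef]; simp only
          rw [Real.exp_le_one_iff]
          simp only [Left.neg_nonpos_iff]
          exact div_nonneg h3 hR.le
        have hH0 : 0 < H ω := Real.exp_pos _
        have hF0 : 0 < F ω := mul_pos (hZ_pos n ω) (Real.exp_pos _)
        rw [Pi.mul_apply, Real.norm_eq_abs, abs_of_nonneg (by positivity)]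
        calc F ω * H ω ≤ F ω * 1 := by nlinarith
          _ ≤ Real.exp (n / 2) * Real.exp (1/2) := by linarith
      calc ∫ ω, Z (n+1) ω ∂μ = ∫ ω, (F * H) ω ∂μ := by rw [hZsucc]
        _ = ∫ ω, (μ[F * H | ℱ n]) ω ∂μ := (integral_condExp (ℱ.le n)).symm
        _ = ∫ ω, F ω * (μ[H | ℱ n]) ω ∂μ := by
            refine integral_congr_ae ?_
            filter_upwards [condExp_mul_of_stronglyMeasurable_left hF_meas hFH_int (hH_int n)] with ω hω
            exact hω
        _ ≤ ∫ ω, Z n ω ∂μ := by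
            refine integral_mono_ae ?_ (hZ_int n) ?_
            · refine (integrable_condExp (f := F * H) (m := ℱ n) (μ := μ)).congr ?_
              filter_upwards [condExp_mul_of_stronglyMeasurable_left hF_meas hFH_int (hH_int n)] with ω hω
              simpa using hω
            · filter_upwards [hkey n] with ω hω
              have hF0 : 0 ≤ F ω := (mul_pos (hZ_pos n ω) (Real.exp_pos _)).le
              calc F ω * (μ[H | ℱ n]) ω ≤ F ω * Real.exp (-(C n ω / (2*R))) :=
                    mul_le_mul_of_nonneg_left hω hF0
                _ = Z n ω := by
                    rw [hF]
                    simp only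
                    rw [mul_assoc, ← Real.exp_add, add_neg_cancel, Real.exp_zero, mul_one]
        _ ≤ 1 := ih
  -- Markov's inequality
  have hmarkov := mul_meas_ge_le_integral_of_nonneg
    (f := Z T) (μ := μ) (Filter.Eventually.of_forall fun ω => (hZ_pos T ω).le)
    (hZ_int T) (1/δ)
  have hmeas_set : MeasurableSet {ω | 1/δ ≤ Z T ω} :=
    measurableSet_le measurable_const ((hZ_meas T).mono (ℱ.le T)).measurable
  have hμA : μ {ω | 1/δ ≤ Z T ω} ≤ ENNReal.ofReal δ := by
    rw [← ENNReal.ofReal_toReal (measure_ne_top μ _)]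
    apply ENNReal.ofReal_le_ofReal
    have hI := hZint_le T
    have hx := ENNReal.toReal_nonneg (a := μ {ω | 1/δ ≤ Z T ω})
    have hδinv : δ * (1/δ) = 1 := by field_simp
    rw [measureReal_def] at hmarkov
    nlinarith [hmarkov]
  have hsub : {ω | 1/δ ≤ Z T ω}ᶜ ⊆
      {ω | ∑ t ∈ Finset.range T, (μ[X (t+1) | ℱ t]) ω
        ≤ 2 * ∑ t ∈ Finset.range T, X (t+1) ω + 8 * R * Real.log (2 / δ)} := by
    intro ω hω
    simp only [Set.mem_compl_iff, Set.mem_setOf_eq, not_le] at hω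
    have h1δ : (0:ℝ) < 1/δ := by positivity
    have hS : ∑ t ∈ Finset.range T, (C t ω / (2*R) - X (t+1) ω / R) < Real.log (1/δ) := by
      rw [← Real.exp_lt_exp, Real.exp_log h1δ]
      exact hω
    have hsum : ∑ t ∈ Finset.range T, (C t ω / (2*R) - X (t+1) ω / R)
        = (∑ t ∈ Finset.range T, C t ω) / (2*R) - (∑ t ∈ Finset.range T, X (t+1) ω) / R := by
      rw [Finset.sum_sub_distrib, ← Finset.sum_div, ← Finset.sum_div]
    rw [hsum] at hS
    set a := ∑ t ∈ Finset.range T, C t ω with ha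
    set b := ∑ t ∈ Finset.range T, X (t+1) ω with hb
    have e : (a / (2*R) - b / R) * (2*R) = a - 2*b := by field_simp
    have h2 : a - 2*b < 2*R * Real.log (1/δ) := by
      have := mul_lt_mul_of_pos_right hS (show (0:ℝ) < 2*R by linarith)
      rw [e] at this
      linarith
    have hlog1 : Real.log (1/δ) ≤ Real.log (2/δ) := by
      apply Real.log_le_log h1δ
      gcongr
      norm_num
    have hlog0 : 0 ≤ Real.log (2/δ) := by
      apply Real.log_nonneg
      rw [le_div_iff₀ hδ0]
      linarith
    show a ≤ 2 * b + 8 * R * Real.log (2/δ)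
    nlinarith [mul_le_mul_of_nonneg_left hlog1 (show (0:ℝ) ≤ 2*R by linarith)]
  calc ENNReal.ofReal (1 - δ) ≤ 1 - ENNReal.ofReal δ := by
        rw [← ENNReal.ofReal_one, ← ENNReal.ofReal_sub _ hδ0.le]
    _ ≤ 1 - μ {ω | 1/δ ≤ Z T ω} := tsub_le_tsub_left hμA 1
    _ = μ ({ω | 1/δ ≤ Z T ω}ᶜ) := by
        rw [measure_compl hmeas_set (measure_ne_top μ _), measure_univ]
    _ ≤ _ := measure_mono hsub
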